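/- arXiv:2603.29145 — 2 statements merged into one kernel-verified Lean document; each statement's English description precedes it below -/
import Mathlib

section
/- Let p be a prime and let E be a normed algebra over ℚ_p whose norm is ultrametric (‖x + y‖ ≤ max(‖x‖, ‖y‖)) and whose restriction to ℚ_p·1 agrees with the p-adic absolute value. Let Δ > 0, let v₁,…,v_d ∈ E, and let Q ⊆ E with 0 ∈ Q. Suppose that for every x ∈ Q and every 1 ≤ j ≤ d, dist(x + v_j, Q) ≤ Δ. Then v₁ℤ_p + ⋯ + v_dℤ_p ⊆ Q_Δ, where v_jℤ_p = {z·v_j : z ∈ ℤ_p} (scalar multiplication by p-adic integers) and Q_Δ = {y ∈ E : dist(y,Q) ≤ Δ}. -/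
open Metric Set Pointwise

noncomputable def covN {E : Type*} [PseudoMetricSpace E] (δ : ℝ) (S : Set E) : ℕ :=
  sInf {n : ℕ | ∃ T : Finset E, T.card = n ∧ S ⊆ ⋃ t ∈ T, Metric.closedBall t δ}

def IsSep {E : Type*} [PseudoMetricSpace E] (δ : ℝ) (A : Set E) : Prop :=
  ∀ x ∈ A, ∀ y ∈ A, x ≠ y → δ ≤ dist x y

def IsDSC {E : Type*} [PseudoMetricSpace E] (δ s C : ℝ) (A : Set E) : Prop :=
  ∀ x ∈ A, ∀ r : ℝ, δ ≤ r →
    (covN δ (A ∩ Metric.closedBall x r) : ℝ) ≤ C * r ^ s * (covN δ A : ℝ)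

def IsROrPadic (K : Type*) [NormedField K] : Prop :=
  (∃ φ : K ≃+* ℝ, ∀ x, ‖φ x‖ = ‖x‖) ∨
  ∃ p : ℕ, ∃ hp : p.Prime,
    letI : Fact p.Prime := ⟨hp⟩
    ∃ φ : K ≃+* ℚ_[p], ∀ x, ‖φ x‖ = ‖x‖

def RealOrComm (K : Type*) (E : Type*) [NormedField K] [Mul E] : Prop :=
  (∃ φ : K ≃+* ℝ, ∀ x, ‖φ x‖ = ‖x‖) ∨ ∀ x y : E, x * y = y * x

def AvoidsSubalg (K : Type*) {E : Type*} [NormedField K] [NormedRing E] [Algebra K E]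
    (C : ℝ) (A : Set E) : Prop :=
  ∀ F : Subalgebra K E, F ≠ ⊤ → ∃ a ∈ A, 1 / C ≤ Metric.infDist a (F : Set E)

def StronglyAvoidsSubalg (K : Type*) {E : Type*} [NormedField K] [NormedRing E] [Algebra K E]
    (C : ℝ) (A : Set E) : Prop :=
  ∀ B ⊆ A, (A.ncard : ℝ) / C ≤ (B.ncard : ℝ) →
    ∀ F : Subalgebra K E, F ≠ ⊤ → ∃ b ∈ B, 1 / C ≤ Metric.infDist b (F : Set E)

def nSumSet {E : Type*} [AddMonoid E] (n : ℕ) (A : Set E) : Set E :=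
  {x | ∃ l : List E, l.length = n ∧ (∀ a ∈ l, a ∈ A) ∧ l.sum = x}

def nProdSet {E : Type*} [Monoid E] (n : ℕ) (A : Set E) : Set E :=
  {x | ∃ l : List E, l.length = n ∧ (∀ a ∈ l, a ∈ A) ∧ l.prod = x}

theorem stmt_12 (p : ℕ) [Fact p.Prime] (E : Type*) [NormedRing E]
    [NormedAlgebra ℚ_[p] E] [IsUltrametricDist E]
    (hext : ∀ z : ℚ_[p], ‖algebraMap ℚ_[p] E z‖ = ‖z‖)
    (Δ : ℝ) (hΔ : 0 < Δ) (d : ℕ) (v : Fin d → E)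
    (Q : Set E) (h0 : (0 : E) ∈ Q)
    (hcl : ∀ x ∈ Q, ∀ j : Fin d, Metric.infDist (x + v j) Q ≤ Δ) :
    ∀ f : Fin d → ℤ_[p], Metric.infDist (∑ j, ((f j : ℚ_[p]) • v j)) Q ≤ Δ := by
  have hQne : Q.Nonempty := ⟨0, h0⟩
  have step : ∀ x : E, Metric.infDist x Q ≤ Δ → ∀ j : Fin d,
      Metric.infDist (x + v j) Q ≤ Δ := by
    intro x hx j
    refine le_of_forall_pos_le_add ?_
    intro ε hε
    obtain ⟨q, hq, hdq⟩ := (Metric.infDist_lt_iff hQne).1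
      (lt_of_le_of_lt hx (lt_add_of_pos_right Δ hε))
    obtain ⟨q', hq', hdq'⟩ := (Metric.infDist_lt_iff hQne).1
      (lt_of_le_of_lt (hcl q hq j) (lt_add_of_pos_right Δ hε))
    calc Metric.infDist (x + v j) Q ≤ dist (x + v j) q' :=
          Metric.infDist_le_dist_of_mem hq'
      _ ≤ max (dist (x + v j) (q + v j)) (dist (q + v j) q') := dist_triangle_max _ _ _
      _ ≤ Δ + ε := by rw [dist_add_right]; exact max_le hdq.le hdq'.le
  have natstep : ∀ (j : Fin d) (k : ℕ) (x : E), Metric.infDist x Q ≤ Δ →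
      Metric.infDist (x + k • v j) Q ≤ Δ := by
    intro j k
    induction k with
    | zero => intro x hx; simpa using hx
    | succ k ih =>
      intro x hx
      rw [succ_nsmul, ← add_assoc]
      exact step (x + k • v j) (ih x hx) j
  have natsum : ∀ n : Fin d → ℕ, Metric.infDist (∑ j, ((n j : ℚ_[p]) • v j)) Q ≤ Δ := by
    intro n
    have key : ∀ s : Finset (Fin d), Metric.infDist (∑ j ∈ s, (n j) • v j) Q ≤ Δ := by
      intro s
      induction s using Finset.induction with
      | empty =>
        have h00 : Metric.infDist (0 : E) Q ≤ dist (0 : E) 0 :=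
          Metric.infDist_le_dist_of_mem h0
        simp only [dist_self] at h00
        simpa using h00.trans hΔ.le
      | insert _ _ hj ih =>
        rw [Finset.sum_insert hj, add_comm]
        exact natstep _ _ _ ih
    simpa [Nat.cast_smul_eq_nsmul] using key Finset.univ
  intro f
  refine le_of_forall_pos_le_add ?_
  intro ε hε
  set V : ℝ := ∑ j, ‖v j‖ with hV
  have hVnn : 0 ≤ V := Finset.sum_nonneg fun j _ => norm_nonneg _
  have hδpos : 0 < ε / (V + 1) := div_pos hε (by linarith)
  have hn : ∀ j : Fin d, ∃ n : ℕ, dist (f j) ((n : ℤ_[p])) < ε / (V + 1) := fun j =>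
    PadicInt.denseRange_natCast.exists_dist_lt (f j) hδpos
  choose n hnlt using hn
  have hdist : dist (∑ j, ((f j : ℚ_[p]) • v j)) (∑ j, ((n j : ℚ_[p]) • v j)) ≤ ε := by
    rw [dist_eq_norm, ← Finset.sum_sub_distrib]
    have heq : ∀ j : Fin d, ((f j : ℚ_[p]) • v j) - ((n j : ℚ_[p]) • v j)
        = (((f j : ℚ_[p]) - (n j : ℚ_[p])) • v j) := fun j => (sub_smul _ _ _).symm
    simp_rw [heq]
    calc ‖∑ j, (((f j : ℚ_[p]) - (n j : ℚ_[p])) • v j)‖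
        ≤ ∑ j, ‖(((f j : ℚ_[p]) - (n j : ℚ_[p])) • v j)‖ := norm_sum_le _ _
      _ ≤ ∑ j, (ε / (V + 1)) * ‖v j‖ := by
          refine Finset.sum_le_sum fun j _ => ?_
          rw [norm_smul]
          refine mul_le_mul_of_nonneg_right ?_ (norm_nonneg _)
          have : ((f j : ℚ_[p]) - ((n j : ℕ) : ℚ_[p])) = (((f j - (n j : ℤ_[p])) : ℤ_[p]) : ℚ_[p]) := by
            push_cast; ring
          rw [this, ← PadicInt.norm_def]
          have h' := hnlt j
          rw [dist_eq_norm] at h'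
          exact h'.le
      _ = (ε / (V + 1)) * V := by rw [← Finset.mul_sum]
      _ ≤ ε := by
          rw [div_mul_eq_mul_div, div_le_iff₀ (by linarith)]
          nlinarith
  calc Metric.infDist (∑ j, ((f j : ℚ_[p]) • v j)) Q
      ≤ Metric.infDist (∑ j, ((n j : ℚ_[p]) • v j)) Q
        + dist (∑ j, ((f j : ℚ_[p]) • v j)) (∑ j, ((n j : ℚ_[p]) • v j)) :=
        Metric.infDist_le_infDist_add_dist
    _ ≤ Δ + ε := add_le_add (natsum n) hdist
end

section
/- Let d be a positive integer and let E be a normed division algebra of dimension d over K, where K = ℝ or K = ℚ_p for a prime p. Let 0 < s ≤ σ < t ≤ d. For all sufficiently small δ, ε > 0 the following holds: if A ⊆ B(0,1) is a finite δ-separated (δ,s,δ^{-ε})-set with |A| = δ^{-σ}, and X ⊆ B(0,1) is a finite δ-separated (δ,t,δ^{-ε})-set, then the number of quintuples (a,b,c,d',x) ∈ A × A × A × A × X with ‖(a + xb) − (c + xd')‖ ≤ δ is at most δ^{-4ε} · δ^{s(t−σ+ε)/t} · |A|³ · |X|. -/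
open Metric Set Pointwise

theorem lcK (K : Type) [NontriviallyNormedField K] (hK : IsROrPadic K) :
    LocallyCompactSpace K := by
  obtain ⟨φ, h⟩ | ⟨p, hp, φ, h⟩ := hK
  · have hiso : Isometry φ := AddMonoidHomClass.isometry_of_norm φ h
    have hiso2 : Isometry φ.symm := AddMonoidHomClass.isometry_of_norm φ.symm
      (fun x => by rw [← h (φ.symm x), RingEquiv.apply_symm_apply])
    have e : K ≃ₜ ℝ := ⟨φ.toEquiv, hiso.continuous, hiso2.continuous⟩
    exact e.locallyCompactSpace_iff.mpr inferInstance
  · haveI : Fact p.Prime := ⟨hp⟩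
    have hiso : Isometry φ := AddMonoidHomClass.isometry_of_norm φ h
    have hiso2 : Isometry φ.symm := AddMonoidHomClass.isometry_of_norm φ.symm
      (fun x => by rw [← h (φ.symm x), RingEquiv.apply_symm_apply])
    have e : K ≃ₜ ℚ_[p] := ⟨φ.toEquiv, hiso.continuous, hiso2.continuous⟩
    exact e.locallyCompactSpace_iff.mpr inferInstance


theorem pack (K : Type) [NontriviallyNormedField K]
    (E : Type) [NormedDivisionRing E] [NormedAlgebra K E] [ProperSpace E] :
    ∃ M : ℕ, 1 ≤ M ∧ ∀ δ : ℝ, 0 < δ → ∀ (y : E) (S : Set E),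
      S ⊆ closedBall y δ → IsSep δ S → S.ncard ≤ M := by
  classical
  obtain ⟨c, hc⟩ := NormedField.exists_one_lt_norm K
  set R := ‖c‖ with hR
  have hR0 : 0 < R := lt_trans one_pos hc
  have hr0 : 0 < 1/(3*R) := by positivity
  obtain ⟨F, hFsub, hFfin, hFcov⟩ :=
    finite_cover_balls_of_compact (isCompact_closedBall (0:E) 1) hr0
  set M := hFfin.toFinset.card with hM
  -- key claim at scale 1/R
  have key : ∀ S' : Set E, S' ⊆ closedBall (0:E) 1 → IsSep (1/R) S' → S'.ncard ≤ M := by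
    intro S' hsub hsep
    have hex : ∀ x ∈ S', ∃ z ∈ F, x ∈ ball z (1/(3*R)) := by
      intro x hx
      have := hFcov (hsub hx)
      obtain ⟨z, hz, hb⟩ := Set.mem_iUnion₂.mp this
      exact ⟨z, hz, hb⟩
    set f : E → E := fun x => if hx : ∃ z ∈ F, x ∈ ball z (1/(3*R)) then hx.choose else 0 with hf
    have hfmem : ∀ x ∈ S', f x ∈ F ∧ x ∈ ball (f x) (1/(3*R)) := by
      intro x hx
      have h1 := hex x hx
      rw [hf]
      simp only [dif_pos h1]
      exact ⟨h1.choose_spec.1, h1.choose_spec.2⟩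
    have hinj : InjOn f S' := by
      intro x hx x' hx' hxy
      by_contra hne
      have h1 := (hfmem x hx).2
      have h2 := (hfmem x' hx').2
      rw [hxy] at h1
      have : dist x x' < 1/R := by
        calc dist x x' ≤ dist x (f x') + dist x' (f x') := dist_triangle_right _ _ _
        _ < 1/(3*R) + 1/(3*R) := add_lt_add (mem_ball.mp h1) (mem_ball.mp h2)
        _ ≤ 1/R := by rw [← add_div]; rw [div_le_div_iff₀ (by positivity) hR0]; ring_nf; nlinarith
      exact absurd (hsep x hx x' hx' hne) (not_le.mpr this)
    have := Set.ncard_le_ncard_of_injOn f (fun a ha => (hfmem a ha).1) hinj hFfin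
    rwa [Set.ncard_eq_toFinset_card F hFfin] at this
  refine ⟨max M 1, le_max_right _ _, ?_⟩
  intro δ hδ y S hsub hsep
  obtain ⟨m, hm1, hm2⟩ := exists_mem_Ico_zpow (x := 1/δ) (y := R) (by positivity) hc
  set u : E := algebraMap K E (c ^ m) with hu
  have hun : ‖u‖ = R ^ m := by rw [hu, norm_algebraMap', norm_zpow]
  have hu0 : u ≠ 0 := by
    intro h
    rw [h, norm_zero] at hun
    exact absurd hun.symm (ne_of_gt (zpow_pos hR0 m))
  have hRm0 : (0:ℝ) < R ^ m := zpow_pos hR0 m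
  set g : E → E := fun x => u * (x - y) with hg
  have hgd : ∀ x x' : E, dist (g x) (g x') = R ^ m * dist x x' := by
    intro x x'
    rw [hg]
    simp only [dist_eq_norm]
    rw [← mul_sub, norm_mul, hun, sub_sub_sub_cancel_right]
  have hginj : Function.Injective g := by
    intro x x' h
    have := hgd x x'
    rw [h, dist_self] at this
    have := (mul_eq_zero.mp this.symm).resolve_left (ne_of_gt hRm0)
    exact dist_eq_zero.mp this
  have h1 : g '' S ⊆ closedBall (0:E) 1 := by
    rintro _ ⟨x, hx, rfl⟩
    rw [mem_closedBall, dist_zero_right, hg]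
    simp only
    rw [norm_mul, hun]
    have hxy : ‖x - y‖ ≤ δ := by
      have := hsub hx
      rwa [mem_closedBall, dist_eq_norm] at this
    calc R ^ m * ‖x - y‖ ≤ (1/δ) * δ := by
          apply mul_le_mul hm1 hxy (norm_nonneg _) (by positivity)
    _ = 1 := by field_simp
  have h2 : IsSep (1/R) (g '' S) := by
    rintro _ ⟨x, hx, rfl⟩ _ ⟨x', hx', rfl⟩ hne
    have hne' : x ≠ x' := fun h => hne (by rw [h])
    rw [hgd]
    have hd := hsep x hx x' hx' hne'
    calc 1/R ≤ R ^ m * δ := by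
          have h3 : 1 < R ^ (m+1) * δ := by
            rw [div_lt_iff₀ hδ] at hm2; linarith
          rw [div_le_iff₀ hR0]
          calc 1 ≤ R ^ (m+1) * δ := h3.le
          _ = R ^ m * δ * R := by rw [zpow_add_one₀ (ne_of_gt hR0)]; ring
    _ ≤ R ^ m * dist x x' := by nlinarith
  calc S.ncard = (g '' S).ncard := (Set.ncard_image_of_injective S hginj).symm
  _ ≤ M := key _ h1 h2
  _ ≤ max M 1 := le_max_left _ _


section Helpers

variable {E : Type*} [PseudoMetricSpace E]

theorem isSep_mono {δ : ℝ} {S T : Set E} (h : IsSep δ T) (hs : S ⊆ T) : IsSep δ S :=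
  fun x hx y hy hxy => h x (hs hx) y (hs hy) hxy

theorem covN_le_ncard {δ : ℝ} (hδ : 0 ≤ δ) {S : Set E} (hS : S.Finite) :
    covN δ S ≤ S.ncard := by
  classical
  apply Nat.sInf_le
  refine ⟨hS.toFinset, by rw [Set.ncard_eq_toFinset_card S hS], fun x hx => ?_⟩
  exact Set.mem_biUnion (hS.mem_toFinset.mpr hx) (mem_closedBall_self hδ)

theorem ncard_le_mul_covN {δ : ℝ} (hδ : 0 ≤ δ) {M : ℕ}
    (hM : ∀ (y : E) (S' : Set E), S' ⊆ closedBall y δ → IsSep δ S' → S'.ncard ≤ M)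
    {S : Set E} (hfin : S.Finite) (hsep : IsSep δ S) :
    S.ncard ≤ covN δ S * M := by
  classical
  set W := {n : ℕ | ∃ T : Finset E, T.card = n ∧ S ⊆ ⋃ t ∈ T, Metric.closedBall t δ} with hW
  have hne : W.Nonempty := by
    refine ⟨S.ncard, hfin.toFinset, by rw [Set.ncard_eq_toFinset_card S hfin], fun x hx => ?_⟩
    exact Set.mem_biUnion (hfin.mem_toFinset.mpr hx) (mem_closedBall_self hδ)
  obtain ⟨T, hTcard, hTcov⟩ : covN δ S ∈ W := Nat.sInf_mem hne
  have hsub : hfin.toFinset ⊆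
      T.biUnion (fun t => (hfin.inter_of_left (closedBall t δ)).toFinset) := by
    intro x hx
    rw [Set.Finite.mem_toFinset] at hx
    obtain ⟨t, ht, hxt⟩ := Set.mem_iUnion₂.mp (hTcov hx)
    exact Finset.mem_biUnion.mpr ⟨t, ht, (Set.Finite.mem_toFinset _).mpr ⟨hx, hxt⟩⟩
  calc S.ncard = hfin.toFinset.card := Set.ncard_eq_toFinset_card S hfin
  _ ≤ (T.biUnion (fun t => (hfin.inter_of_left (closedBall t δ)).toFinset)).card :=
      Finset.card_le_card hsub
  _ ≤ ∑ t ∈ T, (hfin.inter_of_left (closedBall t δ)).toFinset.card := Finset.card_biUnion_le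
  _ ≤ ∑ _t ∈ T, M := by
      refine Finset.sum_le_sum fun t _ => ?_
      rw [← Set.ncard_eq_toFinset_card _ (hfin.inter_of_left _)]
      exact hM t _ Set.inter_subset_right (isSep_mono hsep Set.inter_subset_left)
  _ = T.card * M := by rw [Finset.sum_const, smul_eq_mul]
  _ = covN δ S * M := by rw [hTcard]

theorem dsc_count {δ s C : ℝ} {M : ℕ} (hδ : 0 < δ) (hC : 0 ≤ C)
    (hMpack : ∀ (y : E) (S' : Set E), S' ⊆ closedBall y δ → IsSep δ S' → S'.ncard ≤ M)
    {S : Set E} (hfin : S.Finite) (hsep : IsSep δ S) (hDSC : IsDSC δ s C S)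
    {x : E} (hx : x ∈ S) {r : ℝ} (hr : δ ≤ r) :
    ((S ∩ closedBall x r).ncard : ℝ) ≤ (M : ℝ) * (C * r ^ s * (S.ncard : ℝ)) := by
  have h1 : (S ∩ closedBall x r).ncard ≤ covN δ (S ∩ closedBall x r) * M :=
    ncard_le_mul_covN hδ.le hMpack (hfin.inter_of_left _) (isSep_mono hsep inter_subset_left)
  have h2 := hDSC x hx r hr
  have h3 : (covN δ S : ℝ) ≤ (S.ncard : ℝ) := by exact_mod_cast covN_le_ncard hδ.le hfin
  have hCr : (0:ℝ) ≤ C * r ^ s :=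
    mul_nonneg hC (Real.rpow_nonneg (le_trans hδ.le hr) s)
  calc ((S ∩ closedBall x r).ncard : ℝ)
      ≤ (covN δ (S ∩ closedBall x r) : ℝ) * (M : ℝ) := by exact_mod_cast h1
  _ ≤ (C * r ^ s * (covN δ S : ℝ)) * (M : ℝ) :=
      mul_le_mul_of_nonneg_right h2 (Nat.cast_nonneg M)
  _ ≤ (C * r ^ s * (S.ncard : ℝ)) * (M : ℝ) :=
      mul_le_mul_of_nonneg_right (mul_le_mul_of_nonneg_left h3 hCr) (Nat.cast_nonneg M)
  _ = (M : ℝ) * (C * r ^ s * (S.ncard : ℝ)) := by ring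

theorem dsc_count' {δ s C : ℝ} {M : ℕ} (hδ : 0 < δ) (hC : 0 ≤ C)
    (hMpack : ∀ (y : E) (S' : Set E), S' ⊆ closedBall y δ → IsSep δ S' → S'.ncard ≤ M)
    {S : Set E} (hfin : S.Finite) (hsep : IsSep δ S) (hDSC : IsDSC δ s C S)
    (z : E) {r : ℝ} (hr : δ ≤ 2 * r) :
    ((S ∩ closedBall z r).ncard : ℝ) ≤ (M : ℝ) * (C * (2 * r) ^ s * (S.ncard : ℝ)) := by
  have h2r : (0:ℝ) ≤ 2 * r := le_trans hδ.le hr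
  rcases (S ∩ closedBall z r).eq_empty_or_nonempty with h | ⟨x₀, hx₀S, hx₀B⟩
  · rw [h]
    simp only [Set.ncard_empty, Nat.cast_zero]
    have : (0:ℝ) ≤ (2*r) ^ s := Real.rpow_nonneg h2r s
    positivity
  · have hsub : S ∩ closedBall z r ⊆ S ∩ closedBall x₀ (2 * r) := by
      rintro y ⟨hyS, hyB⟩
      refine ⟨hyS, ?_⟩
      rw [mem_closedBall] at hyB ⊢
      have h1 : dist z x₀ ≤ r := by
        rw [dist_comm]; exact mem_closedBall.mp hx₀B
      calc dist y x₀ ≤ dist y z + dist z x₀ := dist_triangle _ _ _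
      _ ≤ r + r := add_le_add hyB h1
      _ = 2 * r := by ring
    calc ((S ∩ closedBall z r).ncard : ℝ)
        ≤ ((S ∩ closedBall x₀ (2*r)).ncard : ℝ) := by
          exact_mod_cast Set.ncard_le_ncard hsub (hfin.inter_of_left _)
    _ ≤ (M : ℝ) * (C * (2 * r) ^ s * (S.ncard : ℝ)) :=
        dsc_count hδ hC hMpack hfin hsep hDSC hx₀S hr

theorem sum_ite_dist (A' : Finset E) (w : E) (r : ℝ) :
    (∑ a ∈ A', if dist a w ≤ r then (1:ℝ) else 0)
      = (((A' : Set E) ∩ closedBall w r).ncard : ℝ) := by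
  classical
  rw [Finset.sum_boole]
  congr 1
  rw [← Set.ncard_coe_finset]
  congr 1
  ext y
  simp [mem_closedBall]

end Helpers


theorem sum3_reorder {α β : Type*} [AddCommMonoid β] (s u : Finset α) (v : Finset α)
    (G : α → α → α → β) :
    (∑ a ∈ s, ∑ c ∈ u, ∑ x ∈ v, G a c x) = ∑ c ∈ u, ∑ x ∈ v, ∑ a ∈ s, G a c x := by
  rw [Finset.sum_comm]
  exact Finset.sum_congr rfl fun c _ => Finset.sum_comm

theorem sum5_reorder {α β : Type*} [AddCommMonoid β] (s : Finset α) (F : α → α → α → α → β) :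
    (∑ a ∈ s, ∑ b ∈ s, ∑ c ∈ s, ∑ d ∈ s, F a b c d)
      = ∑ b ∈ s, ∑ d ∈ s, ∑ a ∈ s, ∑ c ∈ s, F a b c d := by
  rw [Finset.sum_comm]
  refine Finset.sum_congr rfl fun b _ => ?_
  calc (∑ a ∈ s, ∑ c ∈ s, ∑ d ∈ s, F a b c d)
      = ∑ a ∈ s, ∑ d ∈ s, ∑ c ∈ s, F a b c d :=
        Finset.sum_congr rfl fun a _ => Finset.sum_comm
  _ = ∑ d ∈ s, ∑ a ∈ s, ∑ c ∈ s, F a b c d := Finset.sum_comm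

theorem dyadic {E : Type*} [PseudoMetricSpace E] {δ s t R0 CM : ℝ}
    (hδ0 : 0 < δ) (ht : 0 < t) (hst : s < t) (hCM : 0 ≤ CM) (hR0 : δ ≤ R0)
    (A' : Finset E) (b : E)
    (hcount : ∀ ρ : ℝ, δ ≤ ρ →
      (∑ a ∈ A', if dist a b ≤ ρ then (1:ℝ) else 0) ≤ CM * ρ ^ s)
    (hbdd : ∀ d ∈ A', dist d b ≤ 2)
    (K : ℕ) (hK : (2:ℝ)/δ ≤ 2 ^ K) :
    (∑ d ∈ A'.filter (fun d => R0 < dist d b), (2*δ/dist d b) ^ t)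
      ≤ (K+1 : ℝ) * ((2:ℝ)^(t+s) * CM * δ^s * (R0/(2*δ))^(s-t)) := by
  classical
  set S := A'.filter (fun d => R0 < dist d b) with hS
  set g : ℕ → E → ℝ := fun k d =>
    (if R0 < δ * 2^((k:ℝ)+1) then (2:ℝ)^((1-(k:ℝ))*t) else 0) *
    (if dist d b ≤ δ * 2^((k:ℝ)+1) then (1:ℝ) else 0) with hg
  have hgnonneg : ∀ k d, 0 ≤ g k d := by
    intro k d
    rw [hg]
    apply mul_nonneg <;> split <;> positivity
  -- pointwise bound
  have hpt : ∀ d ∈ S, (2*δ/dist d b) ^ t ≤ ∑ k ∈ Finset.range (K+1), g k d := by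
    intro d hd
    rw [hS, Finset.mem_filter] at hd
    obtain ⟨hdA, hdR0⟩ := hd
    set ρ := dist d b with hρ
    have hδρ : δ ≤ ρ := le_trans hR0 hdR0.le
    have hρ0 : 0 < ρ := lt_of_lt_of_le hδ0 hδρ
    have hρ2 : ρ ≤ 2 := hbdd d hdA
    have hρδ1 : 1 ≤ ρ/δ := (one_le_div hδ0).mpr hδρ
    set n := ⌊ρ/δ⌋₊ with hn
    have hn1 : 1 ≤ n := Nat.le_floor (by exact_mod_cast hρδ1)
    set k := Nat.log 2 n with hk
    have h2k : ((2:ℝ))^(k:ℕ) ≤ ρ/δ := by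
      calc ((2:ℝ))^(k:ℕ) ≤ (n:ℝ) := by exact_mod_cast Nat.pow_log_le_self 2 (by omega)
      _ ≤ ρ/δ := Nat.floor_le (by positivity)
    have hup : ρ/δ < (2:ℝ)^(k+1 : ℕ) := by
      calc ρ/δ < (n:ℝ) + 1 := Nat.lt_floor_add_one _
      _ ≤ (2:ℝ)^(k+1 : ℕ) := by exact_mod_cast Nat.lt_pow_succ_log_self one_lt_two n
    have hkK : k < K + 1 := by
      have h1 : ((2:ℝ))^(k:ℕ) ≤ (2:ℝ)^(K:ℕ) := by
        calc ((2:ℝ))^(k:ℕ) ≤ ρ/δ := h2k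
        _ ≤ 2/δ := by gcongr
        _ ≤ (2:ℝ)^K := hK
      have := (pow_le_pow_iff_right₀ (by norm_num : (1:ℝ) < 2)).mp h1
      omega
    have hrpow_eq : δ * (2:ℝ)^((k:ℝ)+1) = δ * (2:ℝ)^(k+1 : ℕ) := by
      rw [show ((k:ℝ)+1) = ((k+1 : ℕ) : ℝ) by push_cast; ring, Real.rpow_natCast]
    have hup' : ρ < δ * (2:ℝ)^(k+1:ℕ) := by
      rw [div_lt_iff₀ hδ0] at hup; linarith
    have hcond1 : R0 < δ * 2^((k:ℝ)+1) := by
      rw [hrpow_eq]; linarith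
    have hcond2 : dist d b ≤ δ * 2^((k:ℝ)+1) := by
      rw [hrpow_eq]; exact hup'.le
    refine le_trans ?_ (Finset.single_le_sum (f := fun k => g k d)
      (fun i _ => hgnonneg i d) (Finset.mem_range.mpr hkK))
    have hgval : g k d = (2:ℝ)^((1-(k:ℝ))*t) := by
      rw [hg]
      simp only [if_pos hcond1, if_pos hcond2, mul_one]
    show (2*δ/ρ)^t ≤ g k d
    rw [hgval]
    have hlow : δ * (2:ℝ)^(k:ℕ) ≤ ρ := by
      rw [le_div_iff₀ hδ0] at h2k; linarith
    have hbase : 2*δ/ρ ≤ (2:ℝ)^(1-(k:ℝ)) := by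
      have h2pow : (2:ℝ)^(1-(k:ℝ)) = 2 / (2:ℝ)^(k:ℕ) := by
        rw [Real.rpow_sub two_pos, Real.rpow_one, Real.rpow_natCast]
      rw [h2pow, div_le_div_iff₀ hρ0 (pow_pos two_pos k)]
      nlinarith [pow_pos (two_pos (α := ℝ)) k]
    calc (2*δ/ρ)^t ≤ ((2:ℝ)^(1-(k:ℝ)))^t :=
          Real.rpow_le_rpow (by positivity) hbase ht.le
    _ = (2:ℝ)^((1-(k:ℝ))*t) := (Real.rpow_mul two_pos.le _ _).symm
  -- assemble
  set V : ℝ := (2:ℝ)^(t+s) * CM * δ^s * (R0/(2*δ))^(s-t) with hV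
  have hVnonneg : 0 ≤ V := by
    rw [hV]
    have h1 : (0:ℝ) ≤ (2:ℝ)^(t+s) := (Real.rpow_pos_of_pos two_pos _).le
    have h2 : (0:ℝ) ≤ (R0/(2*δ))^(s-t) := Real.rpow_nonneg (div_nonneg (le_trans hδ0.le hR0) (by positivity)) _
    exact mul_nonneg (mul_nonneg (mul_nonneg h1 hCM) (Real.rpow_nonneg hδ0.le s)) h2
  have hperk : ∀ k ∈ Finset.range (K+1), (∑ d ∈ S, g k d) ≤ V := by
    intro k _
    have h1 : (∑ d ∈ S, g k d)
        = (if R0 < δ * 2^((k:ℝ)+1) then (2:ℝ)^((1-(k:ℝ))*t) else 0) *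
          (∑ d ∈ S, if dist d b ≤ δ * 2^((k:ℝ)+1) then (1:ℝ) else 0) := by
      rw [hg, ← Finset.mul_sum]
    have hfac : (0:ℝ) ≤ (if R0 < δ * 2^((k:ℝ)+1) then (2:ℝ)^((1-(k:ℝ))*t) else 0) := by
      split <;> positivity
    have h2 : (∑ d ∈ S, if dist d b ≤ δ * 2^((k:ℝ)+1) then (1:ℝ) else 0)
        ≤ CM * (δ * 2^((k:ℝ)+1))^s := by
      have hsub : (∑ d ∈ S, if dist d b ≤ δ * 2^((k:ℝ)+1) then (1:ℝ) else 0)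
          ≤ ∑ d ∈ A', if dist d b ≤ δ * 2^((k:ℝ)+1) then (1:ℝ) else 0 := by
        apply Finset.sum_le_sum_of_subset_of_nonneg (Finset.filter_subset _ _)
        intro i _ _
        split <;> norm_num
      refine hsub.trans (hcount _ ?_)
      have : (1:ℝ) ≤ (2:ℝ)^((k:ℝ)+1) := Real.one_le_rpow one_le_two (by positivity)
      nlinarith
    rcases lt_or_ge R0 (δ * 2^((k:ℝ)+1)) with hc | hc
    · rw [h1, if_pos hc]
      have hmul : (2:ℝ)^((1-(k:ℝ))*t) *
          (∑ d ∈ S, if dist d b ≤ δ * 2^((k:ℝ)+1) then (1:ℝ) else 0)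
          ≤ (2:ℝ)^((1-(k:ℝ))*t) * (CM * (δ * 2^((k:ℝ)+1))^s) :=
        mul_le_mul_of_nonneg_left h2 (by positivity)
      refine hmul.trans ?_
      -- algebra
      have e1 : (δ * (2:ℝ)^((k:ℝ)+1))^s = δ^s * (2:ℝ)^(((k:ℝ)+1)*s) := by
        rw [Real.mul_rpow hδ0.le (Real.rpow_nonneg two_pos.le _),
          ← Real.rpow_mul two_pos.le]
      have e2 : (2:ℝ)^((1-(k:ℝ))*t) * (2:ℝ)^(((k:ℝ)+1)*s)
          = (2:ℝ)^(t+s) * ((2:ℝ)^((k:ℝ)))^(s-t) := by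
        rw [← Real.rpow_mul two_pos.le (k:ℝ) (s-t), ← Real.rpow_add two_pos,
          ← Real.rpow_add two_pos]
        congr 1; ring
      have hkb : R0/(2*δ) ≤ (2:ℝ)^((k:ℝ)) := by
        rw [div_le_iff₀ (by positivity)]
        have : δ * (2:ℝ)^((k:ℝ)+1) = (2:ℝ)^((k:ℝ)) * (2*δ) := by
          rw [Real.rpow_add two_pos, Real.rpow_one]; ring
        linarith [hc.le.trans_eq this]
      have hkb2 : ((2:ℝ)^((k:ℝ)))^(s-t) ≤ (R0/(2*δ))^(s-t) :=
        Real.rpow_le_rpow_of_nonpos (div_pos (lt_of_lt_of_le hδ0 hR0) (by positivity)) hkb (by linarith)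
      calc (2:ℝ)^((1-(k:ℝ))*t) * (CM * (δ * 2^((k:ℝ)+1))^s)
          = CM * δ^s * ((2:ℝ)^((1-(k:ℝ))*t) * (2:ℝ)^(((k:ℝ)+1)*s)) := by
            rw [e1]; ring
      _ = CM * δ^s * ((2:ℝ)^(t+s) * ((2:ℝ)^((k:ℝ)))^(s-t)) := by rw [e2]
      _ ≤ CM * δ^s * ((2:ℝ)^(t+s) * (R0/(2*δ))^(s-t)) := by
          apply mul_le_mul_of_nonneg_left _ (mul_nonneg hCM (Real.rpow_nonneg hδ0.le s))
          exact mul_le_mul_of_nonneg_left hkb2 (Real.rpow_pos_of_pos two_pos _).le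
      _ = V := by rw [hV]; ring
    · rw [h1, if_neg (not_lt.mpr hc), zero_mul]
      exact hVnonneg
  calc (∑ d ∈ S, (2*δ/dist d b) ^ t) ≤ ∑ d ∈ S, ∑ k ∈ Finset.range (K+1), g k d :=
        Finset.sum_le_sum hpt
  _ = ∑ k ∈ Finset.range (K+1), ∑ d ∈ S, g k d := Finset.sum_comm
  _ ≤ ∑ _k ∈ Finset.range (K+1), V := Finset.sum_le_sum hperk
  _ = (K+1 : ℝ) * V := by
      rw [Finset.sum_const, Finset.card_range, nsmul_eq_mul]
      push_cast; ring

theorem Kbound {δ ε : ℝ} (hδ0 : 0 < δ) (hδh : δ ≤ 1/2) (hε : 0 < ε) (hε1 : ε ≤ 1) :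
    ∃ K : ℕ, (2:ℝ)/δ ≤ 2^K ∧ (K+1 : ℝ) ≤ (2/(ε*Real.log 2) + 2) * δ^(-ε) := by
  have h2δ : (1:ℝ) ≤ 2/δ := by rw [le_div_iff₀ hδ0]; linarith
  set n := ⌊(2:ℝ)/δ⌋₊ with hn
  have hn1 : 1 ≤ n := Nat.le_floor (by exact_mod_cast h2δ)
  set L := Nat.log 2 n with hL
  refine ⟨L+1, ?_, ?_⟩
  · have hstep : (n:ℝ)+1 ≤ (2:ℝ)^(L+1) := by
      have := Nat.lt_pow_succ_log_self (b := 2) one_lt_two n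
      have h2 : n+1 ≤ 2^(L+1) := this
      exact_mod_cast h2
    linarith [Nat.lt_floor_add_one ((2:ℝ)/δ)]
  · have hlog2 : 0 < Real.log 2 := Real.log_pos one_lt_two
    have hLlog : (L:ℝ) * Real.log 2 ≤ Real.log (2/δ) := by
      rw [← Real.log_pow]
      apply Real.log_le_log (by positivity)
      calc ((2:ℝ))^L ≤ (n:ℝ) := by exact_mod_cast Nat.pow_log_le_self 2 (by omega)
      _ ≤ 2/δ := Nat.floor_le (by positivity)
    have hloglog : Real.log (2/δ) ≤ (2/δ)^ε / ε := by
      have h1 : Real.log ((2/δ)^ε) = ε * Real.log (2/δ) := Real.log_rpow (by positivity) ε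
      have h2 : Real.log ((2/δ)^ε) ≤ (2/δ)^ε :=
        (Real.log_le_sub_one_of_pos (Real.rpow_pos_of_pos (by positivity) ε)).trans
          (by linarith [Real.rpow_pos_of_pos (show (0:ℝ) < 2/δ by positivity) ε])
      rw [le_div_iff₀ hε]
      nlinarith
    have hpow : ((2:ℝ)/δ)^ε ≤ 2 * δ^(-ε) := by
      rw [Real.div_rpow two_pos.le hδ0.le, Real.rpow_neg hδ0.le, div_eq_mul_inv]
      have h2e : (2:ℝ)^ε ≤ 2 := by
        calc (2:ℝ)^ε ≤ (2:ℝ)^(1:ℝ) := Real.rpow_le_rpow_of_exponent_le one_le_two hε1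
        _ = 2 := Real.rpow_one 2
      exact mul_le_mul_of_nonneg_right h2e (by positivity)
    have hδε1 : (1:ℝ) ≤ δ^(-ε) :=
      Real.one_le_rpow_of_pos_of_le_one_of_nonpos hδ0 (by linarith) (by linarith)
    have hLb : (L:ℝ) ≤ (2*δ^(-ε)/ε) / Real.log 2 := by
      rw [le_div_iff₀ hlog2]
      calc (L:ℝ) * Real.log 2 ≤ Real.log (2/δ) := hLlog
      _ ≤ (2/δ)^ε / ε := hloglog
      _ ≤ 2*δ^(-ε)/ε := by gcongr
    have heq : (2/(ε*Real.log 2) + 2) * δ^(-ε) = (2*δ^(-ε)/ε)/Real.log 2 + 2*δ^(-ε) := by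
      field_simp
    push_cast
    rw [heq]
    linarith

theorem bucketB2 {E : Type*} [NormedDivisionRing E] {δ : ℝ} {M : ℕ}
    (hMpack : ∀ (y : E) (S' : Set E), S' ⊆ closedBall y δ → IsSep δ S' → S'.ncard ≤ M)
    {A X : Set E} (hAfin : A.Finite) (hXfin : X.Finite) (hAsep : IsSep δ A)
    (b dd : E) :
    (∑ a ∈ hAfin.toFinset, ∑ c ∈ hAfin.toFinset, ∑ x ∈ hXfin.toFinset,
        if ‖(a + x*b) - (c + x*dd)‖ ≤ δ then (1:ℝ) else 0)
      ≤ (A.ncard : ℝ) * ((X.ncard : ℝ) * (M : ℝ)) := by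
  rw [sum3_reorder]
  have key : ∀ c x : E,
      (∑ a ∈ hAfin.toFinset, if ‖(a + x*b) - (c + x*dd)‖ ≤ δ then (1:ℝ) else 0) ≤ (M:ℝ) := by
    intro c x
    have hcond : ∀ a : E, ‖(a + x*b) - (c + x*dd)‖ = dist a (c + x*dd - x*b) := by
      intro a; rw [dist_eq_norm]; congr 1; abel
    calc (∑ a ∈ hAfin.toFinset, if ‖(a + x*b) - (c + x*dd)‖ ≤ δ then (1:ℝ) else 0)
        = ∑ a ∈ hAfin.toFinset, if dist a (c + x*dd - x*b) ≤ δ then (1:ℝ) else 0 :=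
          Finset.sum_congr rfl fun a _ => by rw [hcond]
    _ = ((A ∩ closedBall (c + x*dd - x*b) δ).ncard : ℝ) := by
        rw [sum_ite_dist, hAfin.coe_toFinset]
    _ ≤ (M:ℝ) := by
        exact_mod_cast hMpack _ _ Set.inter_subset_right (isSep_mono hAsep Set.inter_subset_left)
  calc (∑ c ∈ hAfin.toFinset, ∑ x ∈ hXfin.toFinset, ∑ a ∈ hAfin.toFinset,
        if ‖(a + x*b) - (c + x*dd)‖ ≤ δ then (1:ℝ) else 0)
      ≤ ∑ _c ∈ hAfin.toFinset, ∑ _x ∈ hXfin.toFinset, (M:ℝ) :=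
        Finset.sum_le_sum fun c _ => Finset.sum_le_sum fun x _ => key c x
  _ = (hAfin.toFinset.card : ℝ) * ((hXfin.toFinset.card : ℝ) * (M:ℝ)) := by
      rw [Finset.sum_const, Finset.sum_const, nsmul_eq_mul, nsmul_eq_mul]
  _ = (A.ncard : ℝ) * ((X.ncard : ℝ) * (M : ℝ)) := by
      rw [← Set.ncard_eq_toFinset_card A hAfin, ← Set.ncard_eq_toFinset_card X hXfin]


theorem bucketB1 {E : Type*} [NormedDivisionRing E] {δ C t : ℝ} {M : ℕ}
    (hδ0 : 0 < δ) (hC : 0 ≤ C)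
    (hMpack : ∀ (y : E) (S' : Set E), S' ⊆ closedBall y δ → IsSep δ S' → S'.ncard ≤ M)
    {A X : Set E} (hAfin : A.Finite) (hXfin : X.Finite)
    (hXsep : IsSep δ X) (hXDSC : IsDSC δ t C X)
    (b dd : E) (hdist0 : 0 < dist dd b) (hdist2 : dist dd b ≤ 2) :
    (∑ a ∈ hAfin.toFinset, ∑ c ∈ hAfin.toFinset, ∑ x ∈ hXfin.toFinset,
        if ‖(a + x*b) - (c + x*dd)‖ ≤ δ then (1:ℝ) else 0)
      ≤ (A.ncard : ℝ) * ((A.ncard : ℝ) *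
          ((M : ℝ) * (C * (2*δ/dist dd b) ^ t * (X.ncard : ℝ)))) := by
  set ρ := dist dd b with hρ
  have hne : b ≠ dd := (dist_pos.mp hdist0).symm
  have hsub : b - dd ≠ 0 := sub_ne_zero.mpr hne
  have hnorm : ‖b - dd‖ = ρ := by rw [hρ, dist_eq_norm, norm_sub_rev]
  have key : ∀ a c : E,
      (∑ x ∈ hXfin.toFinset, if ‖(a + x*b) - (c + x*dd)‖ ≤ δ then (1:ℝ) else 0)
        ≤ (M : ℝ) * (C * (2*δ/ρ) ^ t * (X.ncard : ℝ)) := by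
    intro a c
    set z := (c - a) * (b - dd)⁻¹ with hz
    have hid : ∀ x : E, dist x z * ρ = ‖(a + x*b) - (c + x*dd)‖ := by
      intro x
      rw [dist_eq_norm, ← hnorm, ← norm_mul]
      congr 1
      rw [hz, sub_mul, inv_mul_cancel_right₀ hsub, mul_sub]
      abel
    have himp : ∀ x : E, ‖(a + x*b) - (c + x*dd)‖ ≤ δ → dist x z ≤ δ/ρ := by
      intro x hx
      rw [le_div_iff₀ hdist0]
      calc dist x z * ρ = ‖(a + x*b) - (c + x*dd)‖ := hid x
      _ ≤ δ := hx
    have hr2 : δ ≤ 2 * (δ/ρ) := by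
      rw [← mul_div_assoc, le_div_iff₀ hdist0]
      nlinarith
    calc (∑ x ∈ hXfin.toFinset, if ‖(a + x*b) - (c + x*dd)‖ ≤ δ then (1:ℝ) else 0)
        ≤ ∑ x ∈ hXfin.toFinset, if dist x z ≤ δ/ρ then (1:ℝ) else 0 := by
          refine Finset.sum_le_sum fun x _ => ?_
          by_cases h : ‖(a + x*b) - (c + x*dd)‖ ≤ δ
          · rw [if_pos h, if_pos (himp x h)]

          · rw [if_neg h]; split <;> norm_num
    _ = ((X ∩ closedBall z (δ/ρ)).ncard : ℝ) := by rw [sum_ite_dist, hXfin.coe_toFinset]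
    _ ≤ (M : ℝ) * (C * (2 * (δ/ρ)) ^ t * (X.ncard : ℝ)) :=
        dsc_count' hδ0 hC hMpack hXfin hXsep hXDSC z hr2
    _ = (M : ℝ) * (C * (2*δ/ρ) ^ t * (X.ncard : ℝ)) := by rw [mul_div_assoc]
  calc (∑ a ∈ hAfin.toFinset, ∑ c ∈ hAfin.toFinset, ∑ x ∈ hXfin.toFinset,
        if ‖(a + x*b) - (c + x*dd)‖ ≤ δ then (1:ℝ) else 0)
      ≤ ∑ _a ∈ hAfin.toFinset, ∑ _c ∈ hAfin.toFinset,
          (M : ℝ) * (C * (2*δ/ρ) ^ t * (X.ncard : ℝ)) :=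
        Finset.sum_le_sum fun a _ => Finset.sum_le_sum fun c _ => key a c
  _ = (hAfin.toFinset.card : ℝ) * ((hAfin.toFinset.card : ℝ) *
        ((M : ℝ) * (C * (2*δ/ρ) ^ t * (X.ncard : ℝ)))) := by
      rw [Finset.sum_const, Finset.sum_const, nsmul_eq_mul, nsmul_eq_mul]
  _ = (A.ncard : ℝ) * ((A.ncard : ℝ) *
        ((M : ℝ) * (C * (2*δ/ρ) ^ t * (X.ncard : ℝ)))) := by
      rw [← Set.ncard_eq_toFinset_card A hAfin]

theorem stmt_14 :
    ∀ d : ℕ, 0 < d →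
      ∀ (K : Type) [NontriviallyNormedField K], IsROrPadic K →
        ∀ (E : Type) [NormedDivisionRing E] [NormedAlgebra K E],
          FiniteDimensional K E → Module.finrank K E = d →
          ∀ s σ t : ℝ, 0 < s → s ≤ σ → σ < t → t ≤ (d : ℝ) →
            ∃ ε₀ : ℝ, 0 < ε₀ ∧ ∀ ε : ℝ, 0 < ε → ε ≤ ε₀ →
              ∃ δ₀ : ℝ, 0 < δ₀ ∧ ∀ δ : ℝ, 0 < δ → δ ≤ δ₀ →
                ∀ A X : Set E,
                  A ⊆ Metric.closedBall 0 1 → A.Finite → IsSep δ A →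
                  IsDSC δ s (δ ^ (-ε)) A → (A.ncard : ℝ) = δ ^ (-σ) →
                  X ⊆ Metric.closedBall 0 1 → X.Finite → IsSep δ X →
                  IsDSC δ t (δ ^ (-ε)) X →
                  (Set.ncard {q : E × E × E × E × E |
                      q.1 ∈ A ∧ q.2.1 ∈ A ∧ q.2.2.1 ∈ A ∧ q.2.2.2.1 ∈ A ∧ q.2.2.2.2 ∈ X ∧
                      ‖(q.1 + q.2.2.2.2 * q.2.1) - (q.2.2.1 + q.2.2.2.2 * q.2.2.2.1)‖ ≤ δ} : ℝ) ≤
                    δ ^ (-(4 * ε)) * δ ^ (s * (t - σ + ε) / t) *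
                      (A.ncard : ℝ) ^ 3 * (X.ncard : ℝ) := by
  intro d hd K _instK hK E _instE _instA hfd hrank s σ t hs hsσ hσt htd
  classical
  haveI : LocallyCompactSpace K := lcK K hK
  haveI : ProperSpace E := FiniteDimensional.proper K E
  obtain ⟨M, hM1, hMpackall⟩ := pack K E
  have hσ0 : 0 < σ := lt_of_lt_of_le hs hsσ
  have hst : s < t := lt_of_le_of_lt hsσ hσt
  have ht0 : 0 < t := lt_trans hσ0 hσt
  have hM0 : (0:ℝ) < (M:ℝ) := by exact_mod_cast hM1
  refine ⟨1, one_pos, ?_⟩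
  intro ε hε0 hε1
  have hlog2 : 0 < Real.log 2 := Real.log_pos one_lt_two
  set cK : ℝ := 2/(ε*Real.log 2) + 2 with hcK
  have hcK0 : 0 < cK := by rw [hcK]; positivity
  have h22t : (0:ℝ) < 2^(2*t) := Real.rpow_pos_of_pos two_pos _
  set CT : ℝ := (M:ℝ)^2 + (M:ℝ)^2 * cK * 2^(2*t) with hCT
  have hCT0 : 0 < CT := by rw [hCT]; positivity
  set γ : ℝ := ε*(1 - s/t) with hγ
  have hγ0 : 0 < γ := mul_pos hε0 (by rw [sub_pos, div_lt_one ht0]; exact hst)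
  refine ⟨min (1/2) (CT⁻¹ ^ γ⁻¹), lt_min (by norm_num)
    (Real.rpow_pos_of_pos (inv_pos.mpr hCT0) _), ?_⟩
  intro δ hδ0 hδle
  have hδh : δ ≤ 1/2 := le_trans hδle (min_le_left _ _)
  have hδ1 : δ ≤ 1 := by linarith
  have habs : CT * δ^γ ≤ 1 := by
    have h1 : δ^γ ≤ (CT⁻¹ ^ γ⁻¹)^γ :=
      Real.rpow_le_rpow hδ0.le (le_trans hδle (min_le_right _ _)) hγ0.le
    have h2 : (CT⁻¹ ^ γ⁻¹)^γ = CT⁻¹ := by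
      rw [← Real.rpow_mul (inv_nonneg.mpr hCT0.le), inv_mul_cancel₀ hγ0.ne', Real.rpow_one]
    calc CT * δ^γ ≤ CT * CT⁻¹ :=
          mul_le_mul_of_nonneg_left (h1.trans_eq h2) hCT0.le
    _ = 1 := mul_inv_cancel₀ hCT0.ne'
  intro A X hAsub hAfin hAsep hADSC hAcard hXsub hXfin hXsep hXDSC
  have hMpack : ∀ (y : E) (S' : Set E), S' ⊆ Metric.closedBall y δ → IsSep δ S' → S'.ncard ≤ M :=
    hMpackall δ hδ0
  have hCd : (0:ℝ) ≤ δ^(-ε) := Real.rpow_nonneg hδ0.le _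
  obtain ⟨Kn, hKn1, hKn2⟩ := Kbound hδ0 hδh hε0 hε1
  set a : ℝ := ((A.ncard : ℕ) : ℝ) with ha
  set xc : ℝ := ((X.ncard : ℕ) : ℝ) with hxc
  have ha0 : 0 ≤ a := Nat.cast_nonneg _
  have hxc0 : 0 ≤ xc := Nat.cast_nonneg _
  set A' := hAfin.toFinset with hA'
  set X' := hXfin.toFinset with hX'
  have hA'coe : (A' : Set E) = A := hAfin.coe_toFinset
  have hacard : (A'.card : ℝ) = a := by
    rw [ha]; exact_mod_cast (Set.ncard_eq_toFinset_card A hAfin).symm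
  -- R0
  set R0 : ℝ := δ^((t-σ)/t) with hR0
  have he1 : (t-σ)/t ≤ 1 := by rw [div_le_one ht0]; linarith
  have he0 : 0 ≤ (t-σ)/t := div_nonneg (by linarith) ht0.le
  have hR0δ : δ ≤ R0 := by
    have h := Real.rpow_le_rpow_of_exponent_ge hδ0 hδ1 he1
    rwa [Real.rpow_one] at h
  have hR0pos : 0 < R0 := lt_of_lt_of_le hδ0 hR0δ
  have hR0nonneg : 0 ≤ R0 := hR0pos.le
  -- Step B : set to iterated sums
  have hLHS : (Set.ncard {q : E × E × E × E × E |
        q.1 ∈ A ∧ q.2.1 ∈ A ∧ q.2.2.1 ∈ A ∧ q.2.2.2.1 ∈ A ∧ q.2.2.2.2 ∈ X ∧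
        ‖(q.1 + q.2.2.2.2 * q.2.1) - (q.2.2.1 + q.2.2.2.2 * q.2.2.2.1)‖ ≤ δ} : ℝ)
      = ∑ b ∈ A', ∑ dd ∈ A', ∑ a' ∈ A', ∑ c ∈ A', ∑ x ∈ X',
          (if ‖(a' + x*b) - (c + x*dd)‖ ≤ δ then (1:ℝ) else 0) := by
    have hQ : {q : E × E × E × E × E |
        q.1 ∈ A ∧ q.2.1 ∈ A ∧ q.2.2.1 ∈ A ∧ q.2.2.2.1 ∈ A ∧ q.2.2.2.2 ∈ X ∧
        ‖(q.1 + q.2.2.2.2 * q.2.1) - (q.2.2.1 + q.2.2.2.2 * q.2.2.2.1)‖ ≤ δ}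
        = ↑((A' ×ˢ A' ×ˢ A' ×ˢ A' ×ˢ X').filter
            (fun q => ‖(q.1 + q.2.2.2.2 * q.2.1) - (q.2.2.1 + q.2.2.2.2 * q.2.2.2.1)‖ ≤ δ)) := by
      ext ⟨a1, b1, c1, d1, x1⟩
      simp only [Set.mem_setOf_eq, Finset.coe_filter, Finset.mem_product,
        Set.Finite.mem_toFinset, hA', hX']
      tauto
    rw [hQ, Set.ncard_coe_finset, Finset.card_filter]
    push_cast
    simp only [Finset.sum_product]
    exact sum5_reorder A' (fun a' b c dd => ∑ x ∈ X',
      (if ‖(a' + x*b) - (c + x*dd)‖ ≤ δ then (1:ℝ) else 0))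
  rw [hLHS]
  -- counting hypotheses
  set CMc : ℝ := (M:ℝ)*(δ^(-ε))*a with hCMc
  have hCMc0 : 0 ≤ CMc := by rw [hCMc]; positivity
  have hcount : ∀ b ∈ A', ∀ ρ : ℝ, δ ≤ ρ →
      (∑ dd ∈ A', if dist dd b ≤ ρ then (1:ℝ) else 0) ≤ CMc * ρ^s := by
    intro b hb ρ hρ
    rw [sum_ite_dist A' b ρ, hA'coe]
    have hbA : b ∈ A := hAfin.mem_toFinset.mp hb
    calc ((A ∩ Metric.closedBall b ρ).ncard : ℝ)
        ≤ (M:ℝ) * (δ^(-ε) * ρ^s * a) := dsc_count hδ0 hCd hMpack hAfin hAsep hADSC hbA hρ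
    _ = CMc * ρ^s := by rw [hCMc]; ring
  have hbdd2 : ∀ b ∈ A', ∀ dd ∈ A', dist dd b ≤ 2 := by
    intro b hb dd hdd
    have h1 : dist b 0 ≤ 1 := mem_closedBall.mp (hAsub (hAfin.mem_toFinset.mp hb))
    have h2 : dist dd 0 ≤ 1 := mem_closedBall.mp (hAsub (hAfin.mem_toFinset.mp hdd))
    calc dist dd b ≤ dist dd 0 + dist 0 b := dist_triangle _ _ _
    _ = dist dd 0 + dist b 0 := by rw [dist_comm 0 b]
    _ ≤ 2 := by linarith
  set V : ℝ := (Kn+1:ℝ) * ((2:ℝ)^(t+s) * CMc * δ^s * (R0/(2*δ))^(s-t)) with hV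
  set c2 : ℝ := a*a*(M:ℝ)*(δ^(-ε))*xc with hc2
  have hc20 : 0 ≤ c2 := by rw [hc2]; positivity
  have hperb : ∀ b ∈ A',
      (∑ dd ∈ A', ∑ a' ∈ A', ∑ c ∈ A', ∑ x ∈ X',
          (if ‖(a' + x*b) - (c + x*dd)‖ ≤ δ then (1:ℝ) else 0))
        ≤ (CMc * R0^s) * (a*(xc*(M:ℝ))) + c2 * V := by
    intro b hb
    rw [← Finset.sum_filter_add_sum_filter_not A' (fun dd => dist dd b ≤ R0)]
    have hle1 : (∑ dd ∈ A'.filter (fun dd => dist dd b ≤ R0),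
        ∑ a' ∈ A', ∑ c ∈ A', ∑ x ∈ X',
          (if ‖(a' + x*b) - (c + x*dd)‖ ≤ δ then (1:ℝ) else 0))
        ≤ (CMc * R0^s) * (a*(xc*(M:ℝ))) := by
      calc (∑ dd ∈ A'.filter (fun dd => dist dd b ≤ R0),
          ∑ a' ∈ A', ∑ c ∈ A', ∑ x ∈ X',
            (if ‖(a' + x*b) - (c + x*dd)‖ ≤ δ then (1:ℝ) else 0))
          ≤ ∑ _dd ∈ A'.filter (fun dd => dist dd b ≤ R0), (a*(xc*(M:ℝ))) := by
            refine Finset.sum_le_sum fun dd _ => ?_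
            exact bucketB2 hMpack hAfin hXfin hAsep b dd
      _ = ((A'.filter (fun dd => dist dd b ≤ R0)).card : ℝ) * (a*(xc*(M:ℝ))) := by
            rw [Finset.sum_const, nsmul_eq_mul]
      _ ≤ (CMc * R0^s) * (a*(xc*(M:ℝ))) := by
            apply mul_le_mul_of_nonneg_right _ (by positivity)
            rw [← Finset.sum_boole]
            exact hcount b hb R0 hR0δ
    have hle2 : (∑ dd ∈ A'.filter (fun dd => ¬ dist dd b ≤ R0),
        ∑ a' ∈ A', ∑ c ∈ A', ∑ x ∈ X',
          (if ‖(a' + x*b) - (c + x*dd)‖ ≤ δ then (1:ℝ) else 0))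
        ≤ c2 * V := by
      have hfeq : A'.filter (fun dd => ¬ dist dd b ≤ R0)
          = A'.filter (fun dd => R0 < dist dd b) := by
        apply Finset.filter_congr
        intro dd _
        simp [not_le]
      rw [hfeq]
      calc (∑ dd ∈ A'.filter (fun dd => R0 < dist dd b),
          ∑ a' ∈ A', ∑ c ∈ A', ∑ x ∈ X',
            (if ‖(a' + x*b) - (c + x*dd)‖ ≤ δ then (1:ℝ) else 0))
          ≤ ∑ dd ∈ A'.filter (fun dd => R0 < dist dd b), c2 * (2*δ/dist dd b)^t := by
            refine Finset.sum_le_sum fun dd hdd => ?_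
            have h1 : R0 < dist dd b := (Finset.mem_filter.mp hdd).2
            have hd0 : 0 < dist dd b := lt_of_lt_of_le hδ0 (hR0δ.trans h1.le)
            have hd2 : dist dd b ≤ 2 := hbdd2 b hb dd (Finset.mem_filter.mp hdd).1
            calc (∑ a' ∈ A', ∑ c ∈ A', ∑ x ∈ X',
                (if ‖(a' + x*b) - (c + x*dd)‖ ≤ δ then (1:ℝ) else 0))
                ≤ a * (a * ((M:ℝ) * (δ^(-ε) * (2*δ/dist dd b)^t * xc))) :=
                  bucketB1 hδ0 hCd hMpack hAfin hXfin hXsep hXDSC b dd hd0 hd2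
            _ = c2 * (2*δ/dist dd b)^t := by rw [hc2]; ring
      _ = c2 * (∑ dd ∈ A'.filter (fun dd => R0 < dist dd b), (2*δ/dist dd b)^t) := by
            rw [Finset.mul_sum]
      _ ≤ c2 * V := by
            apply mul_le_mul_of_nonneg_left _ hc20
            rw [hV]
            exact dyadic hδ0 ht0 hst hCMc0 hR0δ A' b (hcount b hb) (hbdd2 b hb) Kn hKn1
    exact add_le_add hle1 hle2
  have htotal : (∑ b ∈ A', ∑ dd ∈ A', ∑ a' ∈ A', ∑ c ∈ A', ∑ x ∈ X',
      (if ‖(a' + x*b) - (c + x*dd)‖ ≤ δ then (1:ℝ) else 0))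
      ≤ a * ((CMc * R0^s) * (a*(xc*(M:ℝ))) + c2 * V) := by
    calc (∑ b ∈ A', ∑ dd ∈ A', ∑ a' ∈ A', ∑ c ∈ A', ∑ x ∈ X',
        (if ‖(a' + x*b) - (c + x*dd)‖ ≤ δ then (1:ℝ) else 0))
        ≤ ∑ _b ∈ A', ((CMc * R0^s) * (a*(xc*(M:ℝ))) + c2 * V) :=
          Finset.sum_le_sum hperb
    _ = (A'.card : ℝ) * ((CMc * R0^s) * (a*(xc*(M:ℝ))) + c2 * V) := by
          rw [Finset.sum_const, nsmul_eq_mul]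
    _ = a * ((CMc * R0^s) * (a*(xc*(M:ℝ))) + c2 * V) := by rw [hacard]
  refine htotal.trans ?_
  -- numeric endgame
  set β : ℝ := -(4*ε) + s*(t-σ+ε)/t with hβ
  have hβγ : β + γ = -3*ε + s*((t-σ)/t) := by rw [hβ, hγ]; ring
  have hr1 : R0^s = δ^((t-σ)/t*s) := by rw [hR0, ← Real.rpow_mul hδ0.le]
  have hP1 : β + γ ≤ -ε + (t-σ)/t*s := by
    rw [hβγ]
    have hcomm : s*((t-σ)/t) = (t-σ)/t*s := mul_comm _ _
    linarith
  have hbound1 : δ^(-ε) * R0^s ≤ δ^β * δ^γ := by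
    rw [hr1, ← Real.rpow_add hδ0, ← Real.rpow_add hδ0]
    exact Real.rpow_le_rpow_of_exponent_ge hδ0 hδ1 hP1
  set XP : ℝ := -ε + -ε + s + ((t-σ)/t*(s-t) + (t-s)) with hXP
  have hr2 : (R0/(2*δ))^(s-t) = (2:ℝ)^(t-s) * δ^((t-σ)/t*(s-t) + (t-s)) := by
    rw [hR0, div_eq_mul_inv,
      Real.mul_rpow (Real.rpow_nonneg hδ0.le _) (inv_nonneg.mpr (by positivity)),
      ← Real.rpow_mul hδ0.le, Real.inv_rpow (by positivity), ← Real.rpow_neg (by positivity),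
      show -(s-t) = t-s by ring, Real.mul_rpow two_pos.le hδ0.le, Real.rpow_add hδ0]
    ring
  have hFfull : (δ^(-ε)*δ^(-ε)*δ^s) * (R0/(2*δ))^(s-t) = (2:ℝ)^(t-s) * δ^XP := by
    rw [hr2, hXP, Real.rpow_add hδ0 (-ε + -ε + s), Real.rpow_add hδ0 (-ε + -ε),
      Real.rpow_add hδ0 (-ε)]
    ring
  have haδ : a = δ^(-σ) := hAcard
  have ha4 : a*a*a*a = δ^(-σ)*a^3 := by nth_rewrite 1 [haδ]; ring
  have hKle : (Kn+1:ℝ) ≤ cK * δ^(-ε) := by rw [hcK]; exact hKn2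
  have h2comb : (2:ℝ)^(t+s)*(2:ℝ)^(t-s) = (2:ℝ)^(2*t) := by
    rw [← Real.rpow_add two_pos]; congr 1; ring
  have hδfin : δ^XP * δ^(-σ) * δ^(-ε) = δ^(β+γ) := by
    rw [← Real.rpow_add hδ0, ← Real.rpow_add hδ0]
    congr 1
    rw [hβγ, hXP]
    field_simp
    ring
  have hδX0 : (0:ℝ) ≤ δ^XP := Real.rpow_nonneg hδ0.le _
  have hδσ0 : (0:ℝ) ≤ δ^(-σ:ℝ) := Real.rpow_nonneg hδ0.le _
  have h2ts0 : (0:ℝ) ≤ (2:ℝ)^(t-s) := Real.rpow_nonneg two_pos.le _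
  have h2tspos0 : (0:ℝ) ≤ (2:ℝ)^(t+s) := Real.rpow_nonneg two_pos.le _
  have hβ0 : (0:ℝ) ≤ δ^β := Real.rpow_nonneg hδ0.le _
  have hγpow0 : (0:ℝ) ≤ δ^γ := Real.rpow_nonneg hδ0.le _
  have hterm1 : (M:ℝ)^2 * (δ^(-ε) * R0^s) * (a^3*xc)
      ≤ (M:ℝ)^2 * (δ^β*δ^γ) * (a^3*xc) := by
    apply mul_le_mul_of_nonneg_right _ (by positivity)
    exact mul_le_mul_of_nonneg_left hbound1 (by positivity)
  have hterm2 : ((M:ℝ)^2 * ((Kn+1:ℝ) * (2:ℝ)^(t+s)) * ((δ^(-ε)*δ^(-ε)*δ^s) * (R0/(2*δ))^(s-t)))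
        * ((a*a*a*a)*xc)
      ≤ ((M:ℝ)^2*cK*(2:ℝ)^(2*t)) * (δ^β*δ^γ) * (a^3*xc) := by
    rw [hFfull, ha4]
    have hstep : ((M:ℝ)^2 * ((Kn+1:ℝ) * (2:ℝ)^(t+s)) * ((2:ℝ)^(t-s) * δ^XP))
          * ((δ^(-σ:ℝ)*a^3)*xc)
        = (((M:ℝ)^2 * (2:ℝ)^(t+s) * (2:ℝ)^(t-s) * (δ^XP*δ^(-σ:ℝ))) * (a^3*xc)) * (Kn+1:ℝ) := by
      ring
    rw [hstep]
    have hfacnn : (0:ℝ) ≤ ((M:ℝ)^2 * (2:ℝ)^(t+s) * (2:ℝ)^(t-s) * (δ^XP*δ^(-σ:ℝ))) * (a^3*xc) := by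
      have h1 : (0:ℝ) ≤ a^3*xc := by positivity
      have h2 : (0:ℝ) ≤ δ^XP*δ^(-σ:ℝ) := mul_nonneg hδX0 hδσ0
      have h3 : (0:ℝ) ≤ (M:ℝ)^2 * (2:ℝ)^(t+s) * (2:ℝ)^(t-s) :=
        mul_nonneg (mul_nonneg (by positivity) h2tspos0) h2ts0
      exact mul_nonneg (mul_nonneg h3 h2) h1
    calc (((M:ℝ)^2 * (2:ℝ)^(t+s) * (2:ℝ)^(t-s) * (δ^XP*δ^(-σ:ℝ))) * (a^3*xc)) * (Kn+1:ℝ)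
        ≤ (((M:ℝ)^2 * (2:ℝ)^(t+s) * (2:ℝ)^(t-s) * (δ^XP*δ^(-σ:ℝ))) * (a^3*xc)) * (cK * δ^(-ε)) :=
          mul_le_mul_of_nonneg_left hKle hfacnn
    _ = ((M:ℝ)^2*cK*(2:ℝ)^(2*t)) * (δ^(β+γ)) * (a^3*xc) := by
        rw [← hδfin, ← h2comb]; ring
    _ = ((M:ℝ)^2*cK*(2:ℝ)^(2*t)) * (δ^β*δ^γ) * (a^3*xc) := by rw [Real.rpow_add hδ0]
  calc a * ((CMc * R0^s) * (a*(xc*(M:ℝ))) + c2 * V)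
      = (M:ℝ)^2 * (δ^(-ε) * R0^s) * (a^3*xc)
        + ((M:ℝ)^2 * ((Kn+1:ℝ) * (2:ℝ)^(t+s)) * ((δ^(-ε)*δ^(-ε)*δ^s) * (R0/(2*δ))^(s-t)))
          * ((a*a*a*a)*xc) := by
        rw [hCMc, hc2, hV]; ring
  _ ≤ (M:ℝ)^2 * (δ^β*δ^γ) * (a^3*xc)
        + ((M:ℝ)^2*cK*(2:ℝ)^(2*t)) * (δ^β*δ^γ) * (a^3*xc) := add_le_add hterm1 hterm2
  _ = (CT * δ^γ) * (δ^β * (a^3*xc)) := by rw [hCT]; ring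
  _ ≤ 1 * (δ^β * (a^3*xc)) := by
      apply mul_le_mul_of_nonneg_right habs
      exact mul_nonneg hβ0 (by positivity)
  _ = δ ^ (-(4 * ε)) * δ ^ (s * (t - σ + ε) / t) * a ^ 3 * xc := by
      rw [hβ, Real.rpow_add hδ0]; ring
end
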